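/- Let f : ℝ → ℝ be continuous with f(x+1) - f(x) = l for all x, where l is a nonzero integer, let α be irrational, and define T : 𝕋² → 𝕋² by T(x,y) = (x+α, f(x)+y). Then for all sufficiently small ε > 0 and all n ≥ 1, the maximal cardinality s(n,ε) of an (n,ε)-separated set satisfies s(n,ε) ≥ n|l| / (3(ε + η(ε))), where η(ε) = sup{|f(x)-f(y)| : |x-y| ≤ ε}. -/

import Mathlib

open Set

abbrev Torus1 := AddCircle (1:ℝ)
abbrev Torus2 := Torus1 × Torus1

/-- `E` is an `(n, ε)`-separated set for `T`. -/
def IsSeparatedSet (T : Torus2 → Torus2) (n : ℕ) (ε : ℝ) (E : Finset Torus2) : Prop :=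
  ∀ p ∈ E, ∀ q ∈ E, p ≠ q → ∃ i < n, ε < dist (T^[i] p) (T^[i] q)

/-- The modulus of continuity `η(ε) = sup {|f x - f y| : |x - y| ≤ ε}`. -/
noncomputable def modCont (f : ℝ → ℝ) (ε : ℝ) : ℝ :=
  sSup {d : ℝ | ∃ x y : ℝ, |x - y| ≤ ε ∧ d = |f x - f y|}

/- ### Auxiliary lemmas -/

lemma norm_T1 (z : ℝ) : ‖((z:ℝ) : Torus1)‖ = |z - round z| := by
  rw [AddCircle.norm_eq]; norm_num

lemma norm_T1_gt {ε z : ℝ} (h : ∀ k : ℤ, ε < |z - k|) : ε < ‖((z:ℝ) : Torus1)‖ := by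
  rw [norm_T1]; exact h _

lemma norm_T1_le {ε z : ℝ} (h : ‖((z:ℝ) : Torus1)‖ ≤ ε) : ∃ k : ℤ, |z - k| ≤ ε :=
  ⟨round z, by rwa [norm_T1] at h⟩

lemma int_coe_T1 (m : ℤ) : (((m:ℝ)) : Torus1) = 0 := by
  rw [AddCircle.coe_eq_zero_iff]; exact ⟨m, by simp⟩

lemma dist_T1 (a b : ℝ) : dist ((a:ℝ):Torus1) ((b:ℝ):Torus1) = ‖((a - b : ℝ):Torus1)‖ := by
  rw [dist_eq_norm, AddCircle.coe_sub]

lemma coe_inj_T1 {a b : ℝ} (h1 : |a - b| < 1) (h : ((a:ℝ):Torus1) = ((b:ℝ):Torus1)) : a = b := by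
  have h0 : ((a - b : ℝ) : Torus1) = 0 := by rw [AddCircle.coe_sub, h, sub_self]
  rw [AddCircle.coe_eq_zero_iff] at h0
  obtain ⟨k, hk⟩ := h0
  simp only [zsmul_eq_mul, mul_one] at hk
  have hk0 : k = 0 := by
    by_contra hk0
    have : (1:ℝ) ≤ |(k:ℝ)| := by exact_mod_cast Int.one_le_abs hk0
    rw [hk] at this; linarith
  rw [hk0] at hk; simp at hk; linarith [abs_nonneg (a-b), hk]

lemma grid_dist {m i j : ℕ} (hm : 0 < m) (hi : i < m) (hj : j < m) (hij : i ≠ j) :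
    1 / (m:ℝ) ≤ dist ((((i:ℝ)/m : ℝ)):Torus1) ((((j:ℝ)/m : ℝ)):Torus1) := by
  rw [dist_T1, norm_T1]
  have hm' : (0:ℝ) < m := by exact_mod_cast hm
  set z : ℝ := (i:ℝ)/m - (j:ℝ)/m with hz
  set N : ℤ := (i:ℤ) - j - round z * m with hN
  have hNz : z - round z = (N:ℝ) / m := by
    rw [hN]
    push_cast
    field_simp [hz]
    have e1 : (i:ℝ)/m*m = i := div_mul_cancel₀ _ hm'.ne'
    have e2 : (j:ℝ)/m*m = j := div_mul_cancel₀ _ hm'.ne'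
    rw [hz]
    linear_combination e1 - e2
  have hN0 : N ≠ 0 := by
    intro h
    have h2 : (i:ℤ) - j = round z * m := by omega
    have habs : |(i:ℤ) - j| < m := by rw [abs_lt]; omega
    rcases eq_or_ne (round z) 0 with h0 | h0
    · rw [h0, zero_mul] at h2
      exact hij (by omega)
    · have : (m:ℤ) ≤ |(i:ℤ) - j| := by
        rw [h2, abs_mul, abs_of_nonneg (by positivity : (0:ℤ) ≤ (m:ℤ))]
        calc (m:ℤ) = 1 * m := (one_mul _).symm
        _ ≤ |round z| * m := by
            exact mul_le_mul_of_nonneg_right (Int.one_le_abs h0) (by positivity)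
      omega
  rw [hNz, abs_div, abs_of_nonneg hm'.le]
  have h1 : (1:ℝ) ≤ |(N:ℝ)| := by exact_mod_cast Int.one_le_abs hN0
  gcongr

section f
variable {f : ℝ → ℝ} {l : ℤ}

lemma f_int (hfl : ∀ x : ℝ, f (x + 1) - f x = l) :
    ∀ (x : ℝ) (k : ℤ), f (x + k) = f x + k * l := by
  intro x k
  induction k using Int.induction_on with
  | zero => simp
  | succ n ih =>
      have h1 := hfl (x + n)
      have e : x + ((n:ℤ)+1:ℤ) = (x + (n:ℤ)) + 1 := by push_cast; ring
      rw [e]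
      push_cast
      push_cast at ih
      linarith
  | pred n ih =>
      have h1 := hfl (x + (-(n:ℤ)-1:ℤ))
      push_cast at ih h1 ⊢
      have e : x + (-(n:ℝ)) = (x + (-(n:ℝ) - 1)) + 1 := by ring
      rw [e] at ih
      linarith

lemma f_bound (hf : Continuous f) (hfl : ∀ x : ℝ, f (x + 1) - f x = l) :
    ∃ C : ℝ, 0 ≤ C ∧ ∀ x : ℝ, |f x - l * x| ≤ C := by
  obtain ⟨C, hC⟩ := (isCompact_Icc (a := (0:ℝ)) (b := 1)).exists_bound_of_continuousOn
    (f := fun x => f x - l * x) ((hf.sub (continuous_const.mul continuous_id)).continuousOn)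
  refine ⟨max C 0, le_max_right _ _, fun x => ?_⟩
  have hx : x - ⌊x⌋ ∈ Icc (0:ℝ) 1 :=
    ⟨by linarith [Int.floor_le x], by linarith [Int.lt_floor_add_one x]⟩
  have hb := hC _ hx
  have e := f_int hfl (x - ⌊x⌋) ⌊x⌋
  rw [sub_add_cancel] at e
  rw [Real.norm_eq_abs] at hb
  have e2 : f x - l * x = f (x - ⌊x⌋) - l * (x - ⌊x⌋) := by rw [e]; ring
  rw [e2]
  exact hb.trans (le_max_left _ _)

lemma modCont_bdd (hf : Continuous f) (hfl : ∀ x : ℝ, f (x + 1) - f x = l) {ε : ℝ} (hε : 0 ≤ ε) :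
    BddAbove {d : ℝ | ∃ x y : ℝ, |x - y| ≤ ε ∧ d = |f x - f y|} := by
  obtain ⟨C, hC0, hC⟩ := f_bound hf hfl
  refine ⟨2*C + |(l:ℝ)| * ε, fun d hd => ?_⟩
  obtain ⟨x, y, hxy, rfl⟩ := hd
  have h1 := hC x
  have h2 := hC y
  have h3 : |f x - f y| ≤ |f x - l*x| + |f y - l*y| + |(l:ℝ)| * |x - y| := by
    have e : f x - f y = (f x - l*x) - (f y - l*y) + l * (x - y) := by ring
    rw [e]
    refine (abs_add_le _ _).trans ?_
    rw [abs_mul]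
    exact add_le_add (abs_sub _ _) le_rfl
  have h4 : |(l:ℝ)| * |x - y| ≤ |(l:ℝ)| * ε := mul_le_mul_of_nonneg_left hxy (abs_nonneg _)
  linarith

lemma modCont_le (hf : Continuous f) (hfl : ∀ x : ℝ, f (x + 1) - f x = l) {ε : ℝ} (hε : 0 ≤ ε)
    {x y : ℝ} (hxy : |x - y| ≤ ε) : |f x - f y| ≤ modCont f ε :=
  le_csSup (modCont_bdd hf hfl hε) ⟨x, y, hxy, rfl⟩

lemma modCont_nonneg (hf : Continuous f) (hfl : ∀ x : ℝ, f (x + 1) - f x = l) {ε : ℝ}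
    (hε : 0 ≤ ε) : 0 ≤ modCont f ε := by
  have := modCont_le hf hfl hε (x := 0) (y := 0) (by simpa using hε)
  simpa using this

lemma modCont_mono (hf : Continuous f) (hfl : ∀ x : ℝ, f (x + 1) - f x = l) {ε ε' : ℝ}
    (hε : 0 ≤ ε) (h : ε ≤ ε') : modCont f ε ≤ modCont f ε' := by
  refine Real.sSup_le (fun d hd => ?_) (modCont_nonneg hf hfl (hε.trans h))
  obtain ⟨x, y, hxy, rfl⟩ := hd
  exact modCont_le hf hfl (hε.trans h) (hxy.trans h)

lemma modCont_small (hf : Continuous f) (hfl : ∀ x : ℝ, f (x + 1) - f x = l) {δ : ℝ}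
    (hδ : 0 < δ) : ∃ ε > 0, ε ≤ 1/24 ∧ modCont f ε ≤ δ := by
  have hu : UniformContinuousOn f (Icc (-1 : ℝ) 2) :=
    (isCompact_Icc).uniformContinuousOn_of_continuous hf.continuousOn
  rw [Metric.uniformContinuousOn_iff] at hu
  obtain ⟨ε, hε0, hε⟩ := hu δ hδ
  refine ⟨min (ε/2) (1/24), lt_min (by linarith) (by norm_num), min_le_right _ _, ?_⟩
  refine Real.sSup_le (fun d hd => ?_) hδ.le
  obtain ⟨x, y, hxy, rfl⟩ := hd
  have hxy2 : |x - y| ≤ 1/24 := hxy.trans (min_le_right _ _)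
  have hxy1 : |x - y| < ε := lt_of_le_of_lt (hxy.trans (min_le_left _ _)) (by linarith)
  set k : ℤ := ⌊y⌋ with hk
  have hy1 : y - k ∈ Icc (-1:ℝ) 2 := by
    constructor <;> [linarith [Int.floor_le y]; linarith [Int.lt_floor_add_one y]]
  have hx1 : x - k ∈ Icc (-1:ℝ) 2 := by
    have h1 := abs_le.1 hxy2
    constructor <;> [linarith [Int.floor_le y, h1.1]; linarith [Int.lt_floor_add_one y, h1.2]]
  have ex := f_int hfl (x - k) k
  have ey := f_int hfl (y - k) k
  rw [sub_add_cancel] at ex ey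
  have e : f x - f y = f (x - k) - f (y - k) := by rw [ex, ey]; ring
  rw [e]
  have h5 := hε _ hx1 _ hy1 (by rw [Real.dist_eq]; convert hxy1 using 2; ring)
  rw [Real.dist_eq] at h5
  exact h5.le

lemma modCont_pos (hf : Continuous f) (hfl : ∀ x : ℝ, f (x + 1) - f x = l) (hl : l ≠ 0)
    {ε : ℝ} (hε : 0 < ε) : 0 < modCont f ε := by
  set N : ℕ := ⌈1/ε⌉₊ with hNdef
  have hN0 : 0 < N := Nat.ceil_pos.2 (by positivity)
  have hN0' : (0:ℝ) < N := by exact_mod_cast hN0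
  have hNε : 1/(N:ℝ) ≤ ε := by
    rw [div_le_iff₀ hN0']
    have : 1/ε ≤ (N:ℝ) := Nat.le_ceil _
    rw [div_le_iff₀ hε] at this
    linarith
  have htel : ∑ j ∈ Finset.range N, (f (((j:ℕ)+1 : ℕ)/N) - f ((j:ℕ)/N)) = f 1 - f 0 := by
    rw [Finset.sum_range_sub (fun j => f ((j:ℕ)/(N:ℝ)))]
    norm_num [div_self (ne_of_gt hN0')]
  have hterm : ∀ j ∈ Finset.range N, |f (((j:ℕ)+1 : ℕ)/(N:ℝ)) - f ((j:ℕ)/(N:ℝ))| ≤ modCont f ε := by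
    intro j _
    refine modCont_le hf hfl hε.le ?_
    have e : ((j:ℕ)+1 : ℕ)/(N:ℝ) - (j:ℕ)/(N:ℝ) = 1/(N:ℝ) := by push_cast; field_simp; ring
    rw [e, abs_of_pos (by positivity)]
    exact hNε
  have hsum : |f 1 - f 0| ≤ (N:ℝ) * modCont f ε := by
    rw [← htel]
    refine (Finset.abs_sum_le_sum_abs _ _).trans ?_
    calc ∑ j ∈ Finset.range N, |f (((j:ℕ)+1 : ℕ)/(N:ℝ)) - f ((j:ℕ)/(N:ℝ))|
        ≤ ∑ _j ∈ Finset.range N, modCont f ε := Finset.sum_le_sum hterm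
      _ = (N:ℝ) * modCont f ε := by rw [Finset.sum_const, Finset.card_range, nsmul_eq_mul]
  have hfl0 : f 1 - f 0 = l := by have := hfl 0; rwa [zero_add] at this
  have hl1 : (1:ℝ) ≤ |f 1 - f 0| := by rw [hfl0]; exact_mod_cast Int.one_le_abs hl
  nlinarith [modCont_nonneg hf hfl hε.le]

end f

noncomputable def Sn (f : ℝ → ℝ) (α : ℝ) (t : ℕ) (x : ℝ) : ℝ :=
  ∑ i ∈ Finset.range t, f (x + i * α)

lemma Sn_cont {f : ℝ → ℝ} (hf : Continuous f) (α : ℝ) (t : ℕ) :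
    Continuous (Sn f α t) := by
  unfold Sn
  exact continuous_finset_sum _ fun i _ => hf.comp (continuous_id.add continuous_const)

lemma Sn_int {f : ℝ → ℝ} {l : ℤ} (hfl : ∀ x : ℝ, f (x + 1) - f x = l) (α : ℝ) (t : ℕ) (x : ℝ)
    (k : ℤ) : Sn f α t (x + k) = Sn f α t x + t * (k * l) := by
  unfold Sn
  have h : ∀ i ∈ Finset.range t, f (x + (k:ℝ) + i * α) = f (x + i * α) + (k:ℝ) * l := by
    intro i _
    rw [show x + (k:ℝ) + i*α = (x + i*α) + (k:ℝ) by ring, f_int hfl]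
  rw [Finset.sum_congr rfl h, Finset.sum_add_distrib, Finset.sum_const, Finset.card_range]
  push_cast
  ring

lemma iter_eq {α : ℝ} {f : ℝ → ℝ} {F : Torus1 → Torus1}
    (hF : ∀ x : ℝ, F (x : Torus1) = ((f x : ℝ) : Torus1))
    {T : Torus2 → Torus2}
    (hT : ∀ p : Torus2, T p = (p.1 + (α : Torus1), F p.1 + p.2)) (x c : ℝ) :
    ∀ t : ℕ, T^[t] (((x:ℝ) : Torus1), ((c:ℝ) : Torus1)) =
      (((x + t * α : ℝ) : Torus1), ((Sn f α t x + c : ℝ) : Torus1)) := by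
  intro t
  induction t with
  | zero => simp [Sn]
  | succ t ih =>
      rw [Function.iterate_succ_apply', ih, hT]
      dsimp only
      rw [hF]
      rw [Prod.mk.injEq]
      constructor
      · rw [← AddCircle.coe_add]
        push_cast
        ring_nf
      · rw [← AddCircle.coe_add]
        congr 1
        rw [show Sn f α (t+1) x = Sn f α t x + f (x + t*α) from Finset.sum_range_succ _ t]
        ring

set_option maxHeartbeats 1000000 in
theorem stmt2 (l : ℤ) (hl : l ≠ 0) (α : ℝ) (hα : Irrational α)
    (f : ℝ → ℝ) (hf : Continuous f) (hfl : ∀ x : ℝ, f (x + 1) - f x = l)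
    (F : Torus1 → Torus1) (hF : ∀ x : ℝ, F (x : Torus1) = ((f x : ℝ) : Torus1))
    (T : Torus2 → Torus2)
    (hT : ∀ p : Torus2, T p = (p.1 + (α : Torus1), F p.1 + p.2)) :
    ∃ ε₀ > 0, ∀ ε, 0 < ε → ε ≤ ε₀ → ∀ n : ℕ, 1 ≤ n →
      ∃ E : Finset Torus2, IsSeparatedSet T n ε E ∧
        (n : ℝ) * |(l : ℝ)| / (3 * (ε + modCont f ε)) ≤ (E.card : ℝ) := by
  classical
  have habsl : (1:ℝ) ≤ |(l:ℝ)| := by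
    have := Int.one_le_abs hl
    exact_mod_cast this
  obtain ⟨ε₁, hε₁0, hε₁c, hη₁⟩ := modCont_small hf hfl (show (0:ℝ) < 1/24 by norm_num)
  refine ⟨min ε₁ (1/(3*|(l:ℝ)|)), lt_min hε₁0 (by positivity), ?_⟩
  intro ε hε0 hεle n hn
  have hεε₁ : ε ≤ ε₁ := hεle.trans (min_le_left _ _)
  have hε24 : ε ≤ 1/24 := hεε₁.trans hε₁c
  have hεl : ε ≤ 1/(3*|(l:ℝ)|) := hεle.trans (min_le_right _ _)
  have hη24 : modCont f ε ≤ 1/24 := (modCont_mono hf hfl hε0.le hεε₁).trans hη₁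
  have hη0 : 0 < modCont f ε := modCont_pos hf hfl hl hε0
  set η := modCont f ε with hηdef
  have hΔ0 : 0 < ε + η := by linarith
  rcases eq_or_lt_of_le hn with h1 | h2
  ·
    -- n = 1 : grid construction
    subst h1  -- h1 : 1 = n
    set m : ℕ := ⌊1/(2*ε)⌋₊ with hmdef
    have h2ε : (0:ℝ) < 2*ε := by linarith
    have hm_le : (m:ℝ) ≤ 1/(2*ε) := Nat.floor_le (by positivity)
    have hm_gt : 1/(2*ε) - 1 < (m:ℝ) := by
      have := Nat.lt_floor_add_one (1/(2*ε)); linarith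
    have h12 : (12:ℝ) ≤ 1/(2*ε) := by
      rw [le_div_iff₀ h2ε]; linarith
    have hm11 : (11:ℝ) ≤ (m:ℝ) := by linarith
    have hm0 : 0 < m := by exact_mod_cast lt_of_lt_of_le (by norm_num : (0:ℝ) < 11) hm11
    have hm0' : (0:ℝ) < m := by exact_mod_cast hm0
    have hinj1 : ∀ i j : ℕ, i < m → j < m →
        ((((i:ℝ)/m : ℝ)):Torus1) = (((j:ℝ)/m : ℝ):Torus1) → i = j := by
      intro i j hi hj h
      by_contra hij
      have hg := grid_dist hm0 hi hj hij
      rw [h, dist_self] at hg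
      have : (0:ℝ) < 1/m := by positivity
      linarith
    set φ : ℕ × ℕ → Torus2 :=
      fun ij => ((((ij.1:ℝ)/m : ℝ):Torus1), (((ij.2:ℝ)/m : ℝ):Torus1)) with hφdef
    refine ⟨((Finset.range m) ×ˢ (Finset.range m)).image φ, ?_, ?_⟩
    · intro p hp q hq hpq
      obtain ⟨⟨i, j⟩, hmem, rfl⟩ := Finset.mem_image.1 hp
      obtain ⟨⟨i', j'⟩, hmem', rfl⟩ := Finset.mem_image.1 hq
      rw [Finset.mem_product, Finset.mem_range, Finset.mem_range] at hmem hmem'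
      refine ⟨0, by omega, ?_⟩
      simp only [Function.iterate_zero_apply]
      have hεm : ε < 1/(m:ℝ) := by
        rw [lt_div_iff₀ hm0']
        have h6 := (le_div_iff₀ h2ε).mp hm_le
        nlinarith
      have hkey : 1/(m:ℝ) ≤ dist (φ (i,j)) (φ (i',j')) := by
        rcases ne_or_eq i i' with hii | hii
        · refine le_trans (grid_dist hm0 hmem.1 hmem'.1 hii) ?_
          rw [Prod.dist_eq]
          exact le_max_left _ _
        · have hjj : j ≠ j' := by
            intro hjj; exact hpq (by rw [hφdef]; subst hii; subst hjj; rfl)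
          refine le_trans (grid_dist hm0 hmem.2 hmem'.2 hjj) ?_
          rw [Prod.dist_eq]
          exact le_max_right _ _
      linarith
    · have hcard : (((Finset.range m) ×ˢ (Finset.range m)).image φ).card = m * m := by
        rw [Finset.card_image_of_injOn, Finset.card_product, Finset.card_range]
        intro ⟨i,j⟩ hij ⟨i',j'⟩ hij' h
        simp only [Finset.coe_product, Set.mem_prod, Finset.mem_coe, Finset.mem_range] at hij hij'
        rw [hφdef, Prod.mk.injEq] at h
        have e1 := hinj1 i i' hij.1 hij'.1 h.1
        have e2 := hinj1 j j' hij.2 hij'.2 h.2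
        simp [e1, e2]
      rw [hcard]
      push_cast
      have hl3 : |(l:ℝ)| ≤ 1/(3*ε) := by
        rw [le_div_iff₀ (by linarith)]
        rw [le_div_iff₀ (by positivity)] at hεl
        nlinarith
      have hm3 : 1/(3*ε) ≤ (m:ℝ) := by
        rw [div_le_iff₀ (by linarith)]
        have h7 : 1 < ((m:ℝ)+1)*(2*ε) := by
          rw [← div_lt_iff₀ h2ε]
          have := Nat.lt_floor_add_one (1/(2*ε))
          push_cast
          linarith
        nlinarith [h7]
      have h3ε : (0:ℝ) < 1/(3*ε) := by positivity
      calc (1:ℝ) * |(l:ℝ)| / (3 * (ε + η)) ≤ |(l:ℝ)| / (3*ε) := by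
            rw [one_mul]; gcongr; linarith
        _ ≤ (1/(3*ε)) * (1/(3*ε)) := by
            rw [div_eq_mul_one_div]
            exact mul_le_mul_of_nonneg_right hl3 (by positivity)
        _ ≤ (m:ℝ) * m := mul_le_mul hm3 hm3 h3ε.le (by linarith)

  ·
    -- n ≥ 2 : winding construction
    obtain ⟨nn, rfl⟩ : ∃ nn, n = nn + 1 := ⟨n - 1, by omega⟩
    have hnn1 : 1 ≤ nn := by omega
    have hnn1' : (1:ℝ) ≤ (nn:ℝ) := by exact_mod_cast hnn1
    set Δ : ℝ := ε + η with hΔdef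
    set u : ℝ → ℝ := Sn f α nn with hudef
    set w : ℝ := (nn:ℝ) * l with hwdef
    have hu1 : u 1 = u 0 + w := by
      have := Sn_int hfl α nn 0 1
      rw [hudef, hwdef]
      norm_num at this ⊢
      rw [this]
    have hw_abs : |w| = (nn:ℝ) * |(l:ℝ)| := by
      rw [hwdef, abs_mul, abs_of_nonneg (by positivity : (0:ℝ) ≤ (nn:ℝ))]
    have hΔ12 : Δ ≤ 1/12 := by rw [hΔdef]; linarith
    have h12Δ : 12 * Δ ≤ |w| := by
      rw [hw_abs]
      have h5 : (1:ℝ)*1 ≤ (nn:ℝ)*|(l:ℝ)| :=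
        mul_le_mul hnn1' habsl (by norm_num) (by positivity)
      linarith
    have hΔw : Δ ≤ |w| := by linarith
    have hw0 : 0 < |w| := by linarith
    obtain ⟨s, hs_cases, hsw⟩ : ∃ s : ℝ, (s = 1 ∨ s = -1) ∧ s * |w| = w := by
      rcases le_or_gt w 0 with h | h
      · exact ⟨-1, Or.inr rfl, by rw [abs_of_nonpos h]; ring⟩
      · exact ⟨1, Or.inl rfl, by rw [abs_of_pos h, one_mul]⟩
    have hs_abs : s * s = 1 := by rcases hs_cases with rfl | rfl <;> norm_num
    have hs1 : |s| = 1 := by rcases hs_cases with rfl | rfl <;> norm_num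
    set K : ℕ := ⌊|w|/Δ⌋₊ - 1 with hKdef
    have hfl12 : (12:ℝ) ≤ |w|/Δ := by rw [le_div_iff₀ hΔ0]; linarith
    have hfl12' : 12 ≤ ⌊|w|/Δ⌋₊ := Nat.le_floor (by exact_mod_cast hfl12)
    have hK11 : 11 ≤ K := by omega
    have hKsucc : K + 1 = ⌊|w|/Δ⌋₊ := by omega
    have hK_ub : ((K:ℝ) + 1) * Δ ≤ |w| := by
      rw [← le_div_iff₀ hΔ0]
      have : ((K:ℝ) + 1) = (⌊|w|/Δ⌋₊ : ℝ) := by rw [← hKsucc]; push_cast; ring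
      rw [this]
      exact Nat.floor_le (by positivity)
    have hK_lb : |w|/Δ - 2 ≤ (K:ℝ) := by
      have h8 := Nat.lt_floor_add_one (|w|/Δ)
      have h9 : ((⌊|w|/Δ⌋₊ : ℕ) : ℝ) = (K:ℝ) + 1 := by rw [← hKsucc]; push_cast; ring
      rw [h9] at h8
      linarith
    -- choose the points by the intermediate value theorem
    have hucont : ContinuousOn u (uIcc (0:ℝ) 1) := (Sn_cont hf α nn).continuousOn
    have hIVT := intermediate_value_uIcc hucont
    have hex : ∀ j ∈ Finset.Icc 1 K, ∃ x, x ∈ Icc (0:ℝ) 1 ∧ u x = u 0 + s*(j*Δ) := by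
      intro j hj
      rw [Finset.mem_Icc] at hj
      have hj1 : (1:ℝ) ≤ (j:ℝ) := by exact_mod_cast hj.1
      have hjK : (j:ℝ) ≤ (K:ℝ) := by exact_mod_cast hj.2
      have hjΔw : (j:ℝ)*Δ ≤ |w| := by
        calc (j:ℝ)*Δ ≤ ((K:ℝ)+1)*Δ := mul_le_mul_of_nonneg_right (by linarith) hΔ0.le
        _ ≤ |w| := hK_ub
      have hjΔ0 : 0 < (j:ℝ)*Δ := mul_pos (by linarith) hΔ0
      have hmem : u 0 + s*(j*Δ) ∈ uIcc (u 0) (u 1) := by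
        rw [Set.mem_uIcc, hu1]
        rcases hs_cases with rfl | rfl
        · left
          rw [one_mul] at hsw
          constructor <;> linarith
        · right
          rw [neg_one_mul] at hsw
          constructor <;> linarith
      obtain ⟨x, hx1, hx2⟩ := hIVT hmem
      rw [Set.uIcc_of_le (by norm_num : (0:ℝ) ≤ 1)] at hx1
      exact ⟨x, hx1, hx2⟩
    choose! X hX1 hX2 using hex
    -- the chosen points are in the open interval
    have hXoo : ∀ j ∈ Finset.Icc 1 K, X j ∈ Ioo (0:ℝ) 1 := by
      intro j hj
      have hj' := hj
      rw [Finset.mem_Icc] at hj'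
      have hj1 : (1:ℝ) ≤ (j:ℝ) := by exact_mod_cast hj'.1
      have hjK : (j:ℝ) ≤ (K:ℝ) := by exact_mod_cast hj'.2
      obtain ⟨hx0, hx1⟩ := hX1 j hj
      have hsΔ : s*((j:ℝ)*Δ) ≠ 0 := by
        have hs0 : s ≠ 0 := by rcases hs_cases with rfl | rfl <;> norm_num
        exact mul_ne_zero hs0 (ne_of_gt (mul_pos (by linarith) hΔ0))
      constructor
      · rcases lt_or_eq_of_le hx0 with h | h
        · exact h
        · exfalso
          have := hX2 j hj
          rw [← h] at this
          exact hsΔ (by linarith)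
      · rcases lt_or_eq_of_le hx1 with h | h
        · exact h
        · exfalso
          have h5 := hX2 j hj
          rw [h, hu1] at h5
          have h6 : s*((j:ℝ)*Δ) = w := by linarith
          have h7 : (j:ℝ)*Δ = |w| := by
            rcases hs_cases with rfl | rfl <;> linarith
          have h8 : (j:ℝ)*Δ ≤ (K:ℝ)*Δ := mul_le_mul_of_nonneg_right hjK hΔ0.le
          linarith
    -- distinctness of values
    have hval : ∀ i ∈ Finset.Icc 1 K, ∀ j ∈ Finset.Icc 1 K, X i = X j → i = j := by
      intro i hi j hj h
      have h5 := hX2 i hi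
      have h6 := hX2 j hj
      rw [h] at h5
      have h7 : s*((i:ℝ)*Δ) = s*((j:ℝ)*Δ) := by linarith
      have h8 : (i:ℝ) = (j:ℝ) := by
        have h9 : (i:ℝ)*Δ = (j:ℝ)*Δ := by
          rcases hs_cases with rfl | rfl <;> linarith
        exact mul_right_cancel₀ (ne_of_gt hΔ0) h9
      exact_mod_cast h8
    set ψ : ℕ → Torus2 := fun j => (((X j : ℝ):Torus1), (((0:ℝ)):Torus1)) with hψdef
    have hinj : ∀ i ∈ Finset.Icc 1 K, ∀ j ∈ Finset.Icc 1 K, ψ i = ψ j → i = j := by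
      intro i hi j hj h
      rw [hψdef, Prod.mk.injEq] at h
      have hXi := hXoo i hi
      have hXj := hXoo j hj
      refine hval i hi j hj (coe_inj_T1 ?_ h.1)
      rw [abs_sub_lt_iff]
      constructor <;> linarith [hXi.1, hXi.2, hXj.1, hXj.2]
    refine ⟨(Finset.Icc 1 K).image ψ, ?_, ?_⟩
    · -- separation
      intro p hp q hq hpq
      obtain ⟨i, hi, rfl⟩ := Finset.mem_image.1 hp
      obtain ⟨j, hj, rfl⟩ := Finset.mem_image.1 hq
      have hij : i ≠ j := fun h => hpq (by rw [h])
      set a : ℝ := X i with hadef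
      set b : ℝ := X j with hbdef
      by_cases hdab : ε < dist ((a:ℝ):Torus1) ((b:ℝ):Torus1)
      · refine ⟨0, by omega, ?_⟩
        simp only [Function.iterate_zero_apply]
        refine lt_of_lt_of_le hdab ?_
        rw [Prod.dist_eq]
        exact le_max_left _ _
      · push_neg at hdab
        rw [dist_T1] at hdab
        obtain ⟨k, hk⟩ := norm_T1_le hdab
        set b' : ℝ := b + k with hb'def
        have hab : |a - b'| ≤ ε := by rw [hb'def]; convert hk using 2; ring
        set d : ℕ → ℝ := fun t => Sn f α t a - Sn f α t b' with hddef
        have hd0 : d 0 = 0 := by simp [hddef, Sn]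
        have hstep : ∀ t, |d (t+1) - d t| ≤ η := by
          intro t
          have e : d (t+1) - d t = f (a + t*α) - f (b' + t*α) := by
            rw [hddef]
            simp only
            rw [show Sn f α (t+1) a = Sn f α t a + f (a + t*α) from Finset.sum_range_succ _ t,
               show Sn f α (t+1) b' = Sn f α t b' + f (b' + t*α) from Finset.sum_range_succ _ t]
            ring
          rw [e, hηdef]
          refine modCont_le hf hfl hε0.le ?_
          convert hab using 2
          ring
        -- the value of d at time nn
        have hiK : 1 ≤ i ∧ i ≤ K := Finset.mem_Icc.1 hi
        have hjK : 1 ≤ j ∧ j ≤ K := Finset.mem_Icc.1 hj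
        have hij_abs1 : (1:ℝ) ≤ |(i:ℝ) - j| := by
          have : ((i:ℤ) - j) ≠ 0 := by
            intro h; apply hij; omega
          calc (1:ℝ) ≤ |(((i:ℤ) - j : ℤ) : ℝ)| := by exact_mod_cast Int.one_le_abs this
          _ = |(i:ℝ) - j| := by push_cast; ring_nf
        have hij_absK : |(i:ℝ) - j| ≤ K := by
          rw [abs_sub_le_iff]
          have h1 : (i:ℝ) ≤ K := by exact_mod_cast hiK.2
          have h2 : (j:ℝ) ≤ K := by exact_mod_cast hjK.2
          have h3 : (0:ℝ) ≤ i := by positivity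
          have h4 : (0:ℝ) ≤ j := by positivity
          constructor <;> linarith
        have hdnn : Δ ≤ |d nn| := by
          have e1 : Sn f α nn b' = Sn f α nn b + nn * (k * l) := Sn_int hfl α nn b k
          have e2 : d nn = (u a - u b) - k * w := by
            rw [hddef, hudef]
            simp only
            rw [e1, hwdef]
            push_cast
            ring
          have e3 : u a - u b = s * (((i:ℝ) - j) * Δ) := by
            have h5 := hX2 i hi
            have h6 := hX2 j hj
            rw [← hadef] at h5
            rw [← hbdef] at h6
            rw [h5, h6]
            ring
          rw [e2, e3]
          rcases eq_or_ne k 0 with hk0 | hk0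
          · rw [hk0]
            push_cast
            rw [zero_mul, sub_zero, abs_mul, hs1, one_mul, abs_mul, abs_of_pos hΔ0]
            have h9 := mul_le_mul_of_nonneg_right hij_abs1 hΔ0.le
            linarith
          · have hkw : |w| ≤ |(k:ℝ) * w| := by
              have h9 : (1:ℝ) ≤ |(k:ℝ)| := by exact_mod_cast Int.one_le_abs hk0
              calc |w| = 1 * |w| := (one_mul _).symm
              _ ≤ |(k:ℝ)| * |w| := mul_le_mul_of_nonneg_right h9 (abs_nonneg w)
              _ = |(k:ℝ) * w| := (abs_mul _ _).symm
            have hsij : |s * (((i:ℝ) - j) * Δ)| ≤ (K:ℝ) * Δ := by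
              rw [abs_mul, abs_mul, hs1, one_mul, abs_of_pos hΔ0]
              exact mul_le_mul_of_nonneg_right hij_absK hΔ0.le
            calc Δ ≤ |w| - (K:ℝ)*Δ := by linarith
            _ ≤ |(k:ℝ)*w| - |s * (((i:ℝ) - j) * Δ)| := by
                have := hkw; linarith
            _ ≤ |s * (((i:ℝ) - j) * Δ) - (k:ℝ)*w| := by
                rw [abs_sub_comm]
                linarith [abs_sub_abs_le_abs_sub ((k:ℝ)*w) (s * (((i:ℝ) - j) * Δ))]
        -- find the first time where d exceeds ε
        have hPnn : ε < |d nn| := by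
          rw [hΔdef] at hdnn
          linarith
        have hfind : ∃ t, ε < |d t| := ⟨nn, hPnn⟩
        obtain ⟨t', ht_spec, ht_le, hprev⟩ :
            ∃ t', ε < |d (t'+1)| ∧ t' + 1 ≤ nn ∧ |d t'| ≤ ε := by
          have h1 := Nat.find_spec hfind
          have h2 : Nat.find hfind ≤ nn := Nat.find_min' _ hPnn
          have h3 : Nat.find hfind ≠ 0 := by
            intro h
            rw [h, hd0, abs_zero] at h1
            linarith
          refine ⟨Nat.find hfind - 1, ?_, by omega, ?_⟩
          · have e : Nat.find hfind - 1 + 1 = Nat.find hfind := by omega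
            rw [e]
            exact h1
          · have h4 := Nat.find_min hfind (show Nat.find hfind - 1 < Nat.find hfind by omega)
            exact not_lt.1 h4
        have hub : |d (t'+1)| ≤ ε + η := by
          calc |d (t'+1)| ≤ |d t'| + |d (t'+1) - d t'| := by
                have := abs_add_le (d t') (d (t'+1) - d t')
                simpa using this
          _ ≤ ε + η := add_le_add hprev (hstep t')
        refine ⟨t'+1, by omega, ?_⟩
        have hit1 := iter_eq hF hT a 0 (t'+1)
        have hit2 := iter_eq hF hT b 0 (t'+1)
        rw [hψdef]
        simp only
        rw [hit1, hit2, Prod.dist_eq]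
        refine lt_of_lt_of_le ?_ (le_max_right _ _)
        rw [dist_T1]
        have e4 : Sn f α (t'+1) a + 0 - (Sn f α (t'+1) b + 0)
            = d (t'+1) + ((((t'+1) * k * l : ℤ) : ℝ)) := by
          have e1 := Sn_int hfl α (t'+1) b k
          rw [hddef]
          simp only
          rw [hb'def, e1]
          push_cast
          ring
        rw [e4, AddCircle.coe_add, int_coe_T1, add_zero]
        refine norm_T1_gt ?_
        intro m
        rcases eq_or_ne m 0 with hm0 | hm0
        · rw [hm0]
          simpa using ht_spec
        · have hm1 : (1:ℝ) ≤ |(m:ℝ)| := by exact_mod_cast Int.one_le_abs hm0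
          have h5 := abs_sub_abs_le_abs_sub ((m:ℝ)) (d (t'+1))
          have h6 : |(m:ℝ) - d (t'+1)| = |d (t'+1) - (m:ℝ)| := abs_sub_comm _ _
          have hd112 : |d (t'+1)| ≤ 1/6 := by rw [hΔdef] at hΔ12; linarith
          linarith
    · -- cardinality
      have hcard : ((Finset.Icc 1 K).image ψ).card = K := by
        rw [Finset.card_image_of_injOn, Nat.card_Icc]
        · omega
        · intro i hi j hj h
          exact hinj i (by simpa using hi) j (by simpa using hj) h
      rw [hcard]
      have hK4 : (4:ℝ) ≤ (K:ℝ) := by exact_mod_cast le_trans (by norm_num) hK11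
      have hgoal : ((nn:ℝ)+1) * |(l:ℝ)| / (3 * Δ) ≤ (K:ℝ) := by
        rw [div_le_iff₀ (by positivity)]
        have h5 : ((nn:ℝ)+1) * |(l:ℝ)| ≤ 2 * |w| := by
          rw [hw_abs]
          have := mul_le_mul_of_nonneg_right (show (nn:ℝ)+1 ≤ 2*nn by linarith) (abs_nonneg (l:ℝ))
          linarith
        have h6 : |w| ≤ ((K:ℝ) + 2) * Δ := by
          have h7 : |w|/Δ ≤ (K:ℝ) + 2 := by linarith
          rw [div_le_iff₀ hΔ0] at h7
          linarith
        have h8 : 4*Δ ≤ (K:ℝ)*Δ := mul_le_mul_of_nonneg_right hK4 hΔ0.le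
        linarith
      push_cast
      push_cast at hgoal
      linarith
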